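/- Let Ĩ ⊆ ℕ³ be a Borel-fixed upward-closed set with finite complement, decomposed by x-degree as slices Ĩ_i = {(b,c) : (i,b,c) ∈ Ĩ} ⊆ ℕ², for 0 ≤ i ≤ m₁ where m₁ is minimal with (m₁,0,0) ∈ Ĩ. Then for 0 ≤ i < j ≤ m₁, every lattice point (b,c) with b + c ≤ j − i − 1 satisfies: (b, c + h_j) ∉ Ĩ_i, where h_j is the height of Ĩ_j (minimal n with (0,n) ∈ Ĩ_j). Consequently t(I_i, I_j) ≥ C(j−i+1, 2). -/

import Mathlib

/-- Corollary 3.2: for a Borel-fixed staircase `S ⊆ ℕ³` with slices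
`Ĩ_i = {(b,c) : (i,b,c) ∈ S}`, minimal pure exponent `m₁`, and `0 ≤ i < j ≤ m₁`,
every lattice point `(b,c)` with `b + c ≤ j − i − 1` satisfies
`(b, c + h_j) ∉ Ĩ_i`, where `h_j` is the height of `Ĩ_j`;
consequently `t(I_i, I_j) ≥ C(j−i+1, 2)`. -/
theorem t_lower_bound (S : Set (ℕ × ℕ × ℕ))
    (hup : ∀ γ ∈ S, ∀ δ : ℕ × ℕ × ℕ, γ.1 ≤ δ.1 → γ.2.1 ≤ δ.2.1 → γ.2.2 ≤ δ.2.2 → δ ∈ S)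
    (hfin : Sᶜ.Finite)
    (hb1 : ∀ γ ∈ S, 1 ≤ γ.2.2 → (γ.1, γ.2.1 + 1, γ.2.2 - 1) ∈ S)
    (hb2 : ∀ γ ∈ S, 1 ≤ γ.2.2 → (γ.1 + 1, γ.2.1, γ.2.2 - 1) ∈ S)
    (hb3 : ∀ γ ∈ S, 1 ≤ γ.2.1 → (γ.1 + 1, γ.2.1 - 1, γ.2.2) ∈ S)
    (m₁ : ℕ) (hm₁ : (m₁, 0, 0) ∈ S) (hm₁min : ∀ m < m₁, (m, 0, 0) ∉ S)
    (i j : ℕ) (hij : i < j) (hjm : j ≤ m₁)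
    (hj : ℕ) (hhj : (j, 0, hj) ∈ S) (hhjmin : ∀ n < hj, (j, 0, n) ∉ S) :
    (∀ b c : ℕ, b + c ≤ j - i - 1 → (i, b, c + hj) ∉ S)
    ∧ (j - i + 1).choose 2
        ≤ Set.ncard {β : ℕ × ℕ | (i, β.1, β.2) ∉ S ∧ hj ≤ β.2} := by
  -- Step A: push y-coordinate into x
  have stepA : ∀ b x c, (x, b, c) ∈ S → (x + b, 0, c) ∈ S := by
    intro b
    induction b with
    | zero => intro x c h; simpa using h
    | succ b ih =>
      intro x c h
      have h1 := hb3 _ h (by simp)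
      simp only at h1
      have := ih (x + 1) c (by simpa using h1)
      have e : x + 1 + b = x + (b + 1) := by omega
      rwa [e] at this
  -- Step B: push z-coordinate into x
  have stepB : ∀ d x c, (x, 0, c + d) ∈ S → (x + d, 0, c) ∈ S := by
    intro d
    induction d with
    | zero => intro x c h; simpa using h
    | succ d ih =>
      intro x c h
      have h1 := hb2 _ h (by show 1 ≤ c + (d + 1); omega)
      simp only at h1
      have h2 : (x + 1, 0, c + d) ∈ S := by
        have e : c + (d + 1) - 1 = c + d := by omega
        rwa [e] at h1
      have := ih (x + 1) c h2
      have e : x + 1 + d = x + (d + 1) := by omega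
      rwa [e] at this
  -- First claim
  have key : ∀ b c : ℕ, b + c ≤ j - i - 1 → (i, b, c + hj) ∉ S := by
    intro b c hbc hS
    have h1 : (i + b, 0, c + hj) ∈ S := stepA b i (c + hj) hS
    have h2 : (i + b + c, 0, hj) ∈ S := by
      have := stepB c (i + b) hj (by
        have e : hj + c = c + hj := by omega
        rwa [e])
      exact this
    rcases Nat.eq_zero_or_pos hj with h0 | hpos
    · subst h0
      have hlt : i + b + c < m₁ := by omega
      exact hm₁min (i + b + c) hlt h2
    · have h3 := hb2 _ h2 (by show 1 ≤ hj; omega)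
      simp only at h3
      have h4 : (j, 0, hj - 1) ∈ S :=
        hup _ h3 (j, 0, hj - 1) (by simp; omega) (le_refl _) (le_refl _)
      exact hhjmin (hj - 1) (by omega) h4
  refine ⟨key, ?_⟩
  set T : Set (ℕ × ℕ) := {β : ℕ × ℕ | (i, β.1, β.2) ∉ S ∧ hj ≤ β.2} with hT
  set k := j - i - 1 with hk
  -- the triangle as a finset
  set Tri : Finset (ℕ × ℕ) := (Finset.range (k + 1)).biUnion Finset.HasAntidiagonal.antidiagonal with hTri
  have hdisj : ∀ t₁ ∈ Finset.range (k+1), ∀ t₂ ∈ Finset.range (k+1), t₁ ≠ t₂ →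
      Disjoint (Finset.HasAntidiagonal.antidiagonal t₁) (Finset.HasAntidiagonal.antidiagonal t₂) := by
    intro t₁ _ t₂ _ hne
    simp only [Finset.disjoint_left, Finset.HasAntidiagonal.mem_antidiagonal]
    intro p hp1 hp2
    omega
  have hcard : Tri.card = (k + 2).choose 2 := by
    rw [hTri, Finset.card_biUnion hdisj]
    simp only [Finset.Nat.card_antidiagonal]
    have h1 : ∑ t ∈ Finset.range (k+1), (t + 1) = ∑ t ∈ Finset.range (k+2), t := by
      conv_rhs => rw [Finset.sum_range_succ' (fun t => t) (k + 1)]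
      simp
    rw [h1, Finset.sum_range_id, Nat.choose_two_right]
  -- the shifted image
  set f : ℕ × ℕ → ℕ × ℕ := fun p => (p.1, p.2 + hj) with hf
  have hinj : Set.InjOn f ↑Tri := by
    intro p _ q _ hpq
    simp only [hf, Prod.ext_iff] at hpq ⊢
    exact ⟨hpq.1, by omega⟩
  have hsub : f '' ↑Tri ⊆ T := by
    rintro _ ⟨p, hp, rfl⟩
    have hp' : p.1 + p.2 ≤ k := by
      simp only [hTri, Finset.mem_coe, Finset.mem_biUnion, Finset.mem_range,
        Finset.HasAntidiagonal.mem_antidiagonal] at hp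
      obtain ⟨t, ht, hpt⟩ := hp
      omega
    refine ⟨key p.1 p.2 (by omega), by simp [hf]⟩
  have hTfin : T.Finite := by
    have : T ⊆ (fun β : ℕ × ℕ => (i, β.1, β.2)) ⁻¹' Sᶜ := by
      intro β hβ; exact hβ.1
    refine Set.Finite.subset (Set.Finite.preimage ?_ hfin) this
    intro a _ b _ hab
    simp only [Prod.ext_iff] at hab
    exact Prod.ext hab.2.1 hab.2.2
  have hle : (f '' ↑Tri).ncard ≤ T.ncard := Set.ncard_le_ncard hsub hTfin
  have himg : (f '' ↑Tri).ncard = Tri.card := by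
    rw [Set.ncard_image_of_injOn hinj, Set.ncard_coe_finset]
  have hjk : j - i + 1 = k + 2 := by omega
  rw [hjk]
  omega
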